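/- Let n ≥ 1, x > 0 and let m be an integer with 0 ≤ m < n. Let v* ∈ ℝⁿ be any equidistant vector for mass mx. Then v* minimizes f over Λ(mx): for every u ∈ Λ(mx), f(v*) ≤ f(u). -/

import Mathlib

open Finset

/-- `f v = Σ_{1 ≤ l ≤ k ≤ n} (x − Σ_{i=l}^{k} v_i)⁺` (0-indexed over `Fin n`). -/
noncomputable def f (n : ℕ) (x : ℝ) (v : Fin n → ℝ) : ℝ :=
  ∑ l : Fin n, ∑ k : Fin n,
    if l ≤ k then max (x - ∑ i ∈ Finset.Icc l k, v i) 0 else 0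

/-- `Λ(w)`: nonnegative vectors with coordinate sum `w`. -/
def Lambda (n : ℕ) (w : ℝ) : Set (Fin n → ℝ) :=
  {v | (∀ i, 0 ≤ v i) ∧ ∑ i, v i = w}

/-- An equidistant vector for mass `m·x`: determined by positive integers `Δ_1,…,Δ_{m+1}`
with `Σ Δ_k = n+1` and `|Δ_{k₁} − Δ_{k₂}| ≤ 1`, with `v_i = x` exactly when the 1-based
index `i` is one of the partial sums `Σ_{k=1}^{j} Δ_k`, `1 ≤ j ≤ m`. -/
def IsEquidistant (n m : ℕ) (x : ℝ) (v : Fin n → ℝ) : Prop :=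
  ∃ Δ : ℕ → ℕ,
    (∀ k ∈ Finset.Icc 1 (m + 1), 0 < Δ k) ∧
    (∑ k ∈ Finset.Icc 1 (m + 1), Δ k = n + 1) ∧
    (∀ k₁ ∈ Finset.Icc 1 (m + 1), ∀ k₂ ∈ Finset.Icc 1 (m + 1), Δ k₁ ≤ Δ k₂ + 1) ∧
    (∀ i : Fin n,
      ((∃ j, 1 ≤ j ∧ j ≤ m ∧ (i : ℕ) + 1 = ∑ k ∈ Finset.Icc 1 j, Δ k) → v i = x) ∧
      (¬ (∃ j, 1 ≤ j ∧ j ≤ m ∧ (i : ℕ) + 1 = ∑ k ∈ Finset.Icc 1 j, Δ k) → v i = 0))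

noncomputable def wext (n : ℕ) (v : Fin n → ℝ) : ℕ → ℝ :=
  fun i => if h : i < n then v ⟨i, h⟩ else 0

noncomputable def Sp (n : ℕ) (v : Fin n → ℝ) : ℕ → ℝ :=
  fun a => ∑ i ∈ Finset.range a, wext n v i

lemma sum_Icc_fin (n : ℕ) (v : Fin n → ℝ) (l k : Fin n) (hlk : (l:ℕ) ≤ (k:ℕ)) :
    ∑ i ∈ Finset.Icc l k, v i = Sp n v ((k : ℕ) + 1) - Sp n v (l : ℕ) := by
  have h1 : ∑ i ∈ Finset.Icc l k, v i = ∑ i ∈ Finset.Icc (l : ℕ) (k : ℕ), wext n v i := by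
    rw [← Fin.map_valEmbedding_Icc, Finset.sum_map]
    refine Finset.sum_congr rfl fun i _ => ?_
    simp [wext, i.isLt]
  rw [h1, ← Finset.Ico_add_one_right_eq_Icc, Finset.sum_Ico_eq_sub _ (by omega : (l:ℕ) ≤ (k:ℕ)+1)]
  rfl

lemma f_eq_pairs (n : ℕ) (x : ℝ) (v : Fin n → ℝ) :
    f n x v = ∑ s ∈ Icc 1 n, ∑ a ∈ range (n + 1 - s),
      max (x - (Sp n v (a + s) - Sp n v a)) 0 := by
  set G : ℕ → ℕ → ℝ := fun a b => max (x - (Sp n v b - Sp n v a)) 0 with hG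
  have step1 : f n x v = ∑ a ∈ range n, ∑ b ∈ range n,
      if a ≤ b then G a (b + 1) else 0 := by
    unfold f
    rw [← Fin.sum_univ_eq_sum_range (fun a => ∑ b ∈ range n, if a ≤ b then G a (b+1) else 0) n]
    refine Finset.sum_congr rfl fun l _ => ?_
    rw [← Fin.sum_univ_eq_sum_range (fun b => if (l:ℕ) ≤ b then G (l:ℕ) (b+1) else 0) n]
    refine Finset.sum_congr rfl fun k _ => ?_
    by_cases h : l ≤ k
    · rw [if_pos h, if_pos (Fin.le_def.mp h), sum_Icc_fin n v l k (Fin.le_def.mp h)]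
    · rw [if_neg h, if_neg (fun hh => h (Fin.le_def.mpr hh))]
  rw [step1]
  have step2 : ∀ a : ℕ, (∑ b ∈ range n, if a ≤ b then G a (b+1) else 0)
      = ∑ b ∈ range (n+1), if a < b then G a b else 0 := by
    intro a
    rw [Finset.sum_range_succ' (fun b => if a < b then G a b else 0) n]
    simp [Nat.lt_succ_iff]
  simp_rw [step2]
  have step3 : (∑ a ∈ range n, ∑ b ∈ range (n+1), if a < b then G a b else 0)
      = ∑ a ∈ range (n+1), ∑ b ∈ range (n+1), if a < b then G a b else 0 := by
    rw [Finset.sum_range_succ]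
    have : (∑ b ∈ range (n+1), if n < b then G n b else 0) = 0 := by
      refine Finset.sum_eq_zero fun b hb => ?_
      rw [mem_range] at hb
      rw [if_neg (by omega)]
    rw [this, add_zero]
  rw [step3]
  have lhs_eq : (∑ a ∈ range (n+1), ∑ b ∈ range (n+1), if a < b then G a b else 0)
      = ∑ p ∈ ((range (n+1)) ×ˢ (range (n+1))).filter (fun p => p.1 < p.2), G p.1 p.2 := by
    rw [Finset.sum_filter, Finset.sum_product]
  have rhs_eq : (∑ s ∈ Icc 1 n, ∑ a ∈ range (n + 1 - s), G a (a + s))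
      = ∑ p ∈ (Icc 1 n).sigma (fun s => range (n + 1 - s)), G p.2 (p.2 + p.1) := by
    rw [Finset.sum_sigma]
  rw [lhs_eq, rhs_eq]
  refine Finset.sum_nbij' (fun p => ⟨p.2 - p.1, p.1⟩) (fun q => (q.2, q.2 + q.1)) ?_ ?_ ?_ ?_ ?_
  · intro p hp
    simp only [mem_filter, mem_product, mem_range] at hp
    simp only [Finset.mem_sigma, mem_Icc, mem_range]
    omega
  · intro p hp
    simp only [Finset.mem_sigma, mem_Icc, mem_range] at hp
    simp only [mem_filter, mem_product, mem_range]
    omega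
  · intro p hp
    simp only [mem_filter, mem_product, mem_range] at hp
    ext <;> simp <;> omega
  · rintro ⟨s, a⟩ hp
    simp only [Finset.mem_sigma, mem_Icc, mem_range] at hp
    have : a + s - a = s := by omega
    simp [this]
  · intro p hp
    simp only [mem_filter, mem_product, mem_range] at hp
    have : p.1 + (p.2 - p.1) = p.2 := by omega
    simp only [this]


/-- Any equidistant vector for mass `m·x` minimizes `f` over `Λ(m·x)`. -/
theorem statement2 (n m : ℕ) (hn : 1 ≤ n) (hm : m < n) (x : ℝ) (hx : 0 < x)
    (vstar : Fin n → ℝ) (hv : IsEquidistant n m x vstar) :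
    ∀ u ∈ Lambda n ((m : ℝ) * x), f n x vstar ≤ f n x u := by
  intro u hu
  obtain ⟨hu0, husum⟩ := hu
  obtain ⟨Δ, hΔpos, hΔsum, hΔbal, hΔv⟩ := hv
  set P : ℕ → ℕ := fun j => ∑ k ∈ Finset.Icc 1 j, Δ k with hP
  obtain ⟨k₀, hk₀mem, hk₀min⟩ :=
    Finset.exists_min_image (Finset.Icc 1 (m+1)) Δ ⟨1, by simp⟩
  set q := Δ k₀ with hq
  have hq1 : 1 ≤ q := hΔpos k₀ hk₀mem
  have hΔub : ∀ k ∈ Finset.Icc 1 (m+1), Δ k ≤ q + 1 := fun k hk => hΔbal k hk k₀ hk₀mem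
  have hΔlb : ∀ k ∈ Finset.Icc 1 (m+1), q ≤ Δ k := hk₀min
  have hP0 : P 0 = 0 := by simp [hP]
  have hPtop : P (m+1) = n + 1 := hΔsum
  have hPmono : ∀ j1 j2, j1 ≤ j2 → P j1 ≤ P j2 := by
    intro j1 j2 h
    exact Finset.sum_le_sum_of_subset (Finset.Icc_subset_Icc_right h)
  have hPcons : ∀ j, P (j+1) = P j + Δ (j+1) := by
    intro j
    exact Finset.sum_Icc_succ_top (by omega) Δ
  have hPgap : ∀ j1 j2, j1 < j2 → j2 ≤ m + 1 → P j1 + q ≤ P j2 := by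
    intro j1 j2 h12 h2m
    have hsplit : P j1 + ∑ k ∈ Finset.Ico (j1+1) (j2+1), Δ k = P j2 := by
      have e1 : P j1 = ∑ k ∈ Finset.Ico 1 (j1+1), Δ k := by rw [hP]; rw [Finset.Ico_add_one_right_eq_Icc]
      have e2 : P j2 = ∑ k ∈ Finset.Ico 1 (j2+1), Δ k := by rw [hP]; rw [Finset.Ico_add_one_right_eq_Icc]
      rw [e1, e2]
      exact Finset.sum_Ico_consecutive _ (by omega) (by omega)
    have hsingle : q ≤ ∑ k ∈ Finset.Ico (j1+1) (j2+1), Δ k := by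
      calc q ≤ Δ j2 := hΔlb j2 (Finset.mem_Icc.mpr ⟨by omega, h2m⟩)
        _ ≤ ∑ k ∈ Finset.Ico (j1+1) (j2+1), Δ k :=
          Finset.single_le_sum (fun k _ => Nat.zero_le _) (Finset.mem_Ico.mpr ⟨by omega, by omega⟩)
    omega
  have hPq : ∀ j, 1 ≤ j → j ≤ m + 1 → q ≤ P j := by
    intro j h1 h2
    have := hPgap 0 j (by omega) h2
    omega
  have hPm : P m + Δ (m+1) = n + 1 := by
    have := hPcons m
    omega
  have hΔm1 : q ≤ Δ (m+1) := hΔlb (m+1) (Finset.mem_Icc.mpr ⟨by omega, le_rfl⟩)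
  set c : ℕ → ℕ := fun a => ((Finset.Icc 1 m).filter (fun j => P j ≤ a)).card with hc
  -- S vstar = x * c
  have hSstar : ∀ a, Sp n vstar a = x * (c a : ℝ) := by
    intro a
    have hw : ∀ i : ℕ, wext n vstar i = ∑ j ∈ Finset.Icc 1 m, if P j = i + 1 then x else 0 := by
      intro i
      by_cases hi : i < n
      · have hval : wext n vstar i = vstar ⟨i, hi⟩ := dif_pos hi
        by_cases hex : ∃ j, 1 ≤ j ∧ j ≤ m ∧ i + 1 = P j
        · obtain ⟨j0, hj01, hj0m, hj0⟩ := hex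
          have hv1 : vstar ⟨i, hi⟩ = x := (hΔv ⟨i, hi⟩).1 ⟨j0, hj01, hj0m, hj0⟩
          rw [hval, hv1, Finset.sum_eq_single_of_mem j0 (Finset.mem_Icc.mpr ⟨hj01, hj0m⟩)]
          · rw [if_pos hj0.symm]
          · intro j hj hne
            rw [Finset.mem_Icc] at hj
            rw [if_neg]
            intro hPj
            rcases Nat.lt_or_ge j j0 with h | h
            · have := hPgap j j0 h (by omega)
              omega
            · have := hPgap j0 j (by omega) (by omega)
              omega
        · have hv0 : vstar ⟨i, hi⟩ = 0 := (hΔv ⟨i, hi⟩).2 hex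
          rw [hval, hv0]
          symm
          refine Finset.sum_eq_zero fun j hj => ?_
          rw [Finset.mem_Icc] at hj
          exact if_neg (fun hPj => hex ⟨j, hj.1, hj.2, hPj.symm⟩)
      · have hval : wext n vstar i = 0 := dif_neg hi
        rw [hval]
        symm
        refine Finset.sum_eq_zero fun j hj => ?_
        rw [Finset.mem_Icc] at hj
        refine if_neg fun hPj => ?_
        have h1 : P j ≤ P m := hPmono j m hj.2
        omega
    have : Sp n vstar a = ∑ j ∈ Finset.Icc 1 m, if P j ≤ a then x else 0 := by
      calc Sp n vstar a = ∑ i ∈ range a, ∑ j ∈ Finset.Icc 1 m, if P j = i + 1 then x else 0 :=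
            Finset.sum_congr rfl (fun i _ => hw i)
        _ = ∑ j ∈ Finset.Icc 1 m, ∑ i ∈ range a, if P j = i + 1 then x else 0 := Finset.sum_comm
        _ = ∑ j ∈ Finset.Icc 1 m, if P j ≤ a then x else 0 := by
            refine Finset.sum_congr rfl fun j hj => ?_
            rw [Finset.mem_Icc] at hj
            have hPj1 : 1 ≤ P j := le_trans hq1 (hPq j hj.1 (by omega))
            have hcond : ∀ i : ℕ, (P j = i + 1) ↔ (i = P j - 1) := by omega
            simp_rw [hcond]
            rw [Finset.sum_ite_eq' (range a) (P j - 1) (fun _ => x)]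
            refine if_congr ?_ rfl rfl
            rw [mem_range]
            omega
    rw [this, ← Finset.sum_filter, Finset.sum_const, nsmul_eq_mul, mul_comm]
  have hcmono : ∀ a b : ℕ, a ≤ b → c a ≤ c b := by
    intro a b hab
    refine Finset.card_le_card (fun j hj => ?_)
    rw [Finset.mem_filter] at hj ⊢
    exact ⟨hj.1, le_trans hj.2 hab⟩
  have hczero : ∀ a, a < q → c a = 0 := by
    intro a ha
    rw [hc]
    simp only [Finset.card_eq_zero]
    refine Finset.filter_eq_empty_iff.mpr fun j hj => ?_
    rw [Finset.mem_Icc] at hj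
    have := hPq j hj.1 (by omega)
    omega
  have hcfull : ∀ a, n + 1 - q ≤ a → c a = m := by
    intro a ha
    show ((Finset.Icc 1 m).filter (fun j => P j ≤ a)).card = m
    have : (Finset.Icc 1 m).filter (fun j => P j ≤ a) = Finset.Icc 1 m := by
      refine Finset.filter_true_of_mem fun j hj => ?_
      rw [Finset.mem_Icc] at hj
      have h1 : P j ≤ P m := hPmono j m hj.2
      omega
    rw [this, Nat.card_Icc]
    omega
  have hcstep : ∀ a b : ℕ, a ≤ b → b ≤ a + q → c b ≤ c a + 1 := by
    intro a b hab hba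
    have hsub : (Finset.Icc 1 m).filter (fun j => P j ≤ a)
        ⊆ (Finset.Icc 1 m).filter (fun j => P j ≤ b) := by
      intro j hj
      rw [Finset.mem_filter] at hj ⊢
      exact ⟨hj.1, le_trans hj.2 hab⟩
    have hcard : (((Finset.Icc 1 m).filter (fun j => P j ≤ b)) \
        ((Finset.Icc 1 m).filter (fun j => P j ≤ a))).card ≤ 1 := by
      rw [Finset.card_le_one]
      intro j1 hj1 j2 hj2
      simp only [Finset.mem_sdiff, Finset.mem_filter, Finset.mem_Icc, not_and, not_le] at hj1 hj2
      by_contra hne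
      rcases Nat.lt_or_ge j1 j2 with h | h
      · have := hPgap j1 j2 h (by omega)
        have h1 := hj1.2 hj1.1.1
        omega
      · have hlt : j2 < j1 := by omega
        have := hPgap j2 j1 hlt (by omega)
        have h2 := hj2.2 hj2.1.1
        omega
    have := Finset.card_sdiff_add_card_eq_card hsub
    show ((Finset.Icc 1 m).filter (fun j => P j ≤ b)).card
      ≤ ((Finset.Icc 1 m).filter (fun j => P j ≤ a)).card + 1
    omega
  have hbound : ∀ a b : ℕ, b ≤ n → a + q + 1 ≤ b →
      ∃ j, 1 ≤ j ∧ j ≤ m ∧ a < P j ∧ P j ≤ b := by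
    intro a b hbn hab
    obtain ⟨j0, hj0mem, hj0max⟩ := Finset.exists_max_image
      ((range (m+2)).filter (fun j => P j ≤ a)) id
      ⟨0, Finset.mem_filter.mpr ⟨mem_range.mpr (by omega), by rw [hP0]; omega⟩⟩
    simp only [Finset.mem_filter, mem_range] at hj0mem
    have hj0m : j0 ≤ m := by
      by_contra h
      have he : j0 = m + 1 := by omega
      rw [he, hPtop] at hj0mem
      omega
    have hnotin : ¬ (P (j0+1) ≤ a) := by
      intro hle
      have hmem2 : j0 + 1 ∈ (range (m+2)).filter (fun j => P j ≤ a) :=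
        Finset.mem_filter.mpr ⟨mem_range.mpr (by omega), hle⟩
      have := hj0max _ hmem2
      simp at this
    have hPle : P (j0+1) ≤ b := by
      rw [hPcons j0]
      have h1 : Δ (j0+1) ≤ q + 1 := hΔub (j0+1) (Finset.mem_Icc.mpr ⟨by omega, by omega⟩)
      omega
    have hjm : j0 + 1 ≤ m := by
      by_contra h
      have he : j0 + 1 = m + 1 := by omega
      rw [he, hPtop] at hPle
      omega
    exact ⟨j0 + 1, by omega, hjm, by omega, hPle⟩
  have hcgrow : ∀ a b : ℕ, a + q + 1 ≤ b → b ≤ n → c a + 1 ≤ c b := by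
    intro a b hab hbn
    obtain ⟨j, hj1, hjm, hja, hjb⟩ := hbound a b hbn hab
    have hsub : (Finset.Icc 1 m).filter (fun j => P j ≤ a)
        ⊆ (Finset.Icc 1 m).filter (fun j => P j ≤ b) := by
      intro j' hj'
      rw [Finset.mem_filter] at hj' ⊢
      exact ⟨hj'.1, le_trans hj'.2 (by omega)⟩
    have hss : (Finset.Icc 1 m).filter (fun j => P j ≤ a)
        ⊂ (Finset.Icc 1 m).filter (fun j => P j ≤ b) := by
      refine (Finset.ssubset_iff_of_subset hsub).mpr ⟨j, ?_, ?_⟩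
      · exact Finset.mem_filter.mpr ⟨Finset.mem_Icc.mpr ⟨hj1, hjm⟩, hjb⟩
      · intro hmem
        rw [Finset.mem_filter] at hmem
        omega
    have := Finset.card_lt_card hss
    show ((Finset.Icc 1 m).filter (fun j => P j ≤ a)).card + 1
      ≤ ((Finset.Icc 1 m).filter (fun j => P j ≤ b)).card
    omega
  -- telescoping
  have tele : ∀ (v : Fin n → ℝ) (s : ℕ), s ≤ n →
      ∑ a ∈ range (n + 1 - s), (Sp n v (a + s) - Sp n v a)
        = ∑ a ∈ Finset.Ico (n+1-s) (n+1), Sp n v a - ∑ a ∈ Finset.Ico 0 s, Sp n v a := by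
    intro v s hs
    rw [Finset.sum_sub_distrib]
    have h1 : ∑ a ∈ range (n+1-s), Sp n v (a+s) = ∑ a ∈ Finset.Ico s (n+1), Sp n v a := by
      rw [Finset.sum_Ico_eq_sum_range]
      refine Finset.sum_congr rfl fun a _ => ?_
      rw [add_comm]
    have h2 : ∑ a ∈ range (n+1-s), Sp n v a = ∑ a ∈ Finset.Ico 0 (n+1-s), Sp n v a := by
      rw [Finset.range_eq_Ico]
    have h3 : ∑ a ∈ Finset.Ico 0 s, Sp n v a + ∑ a ∈ Finset.Ico s (n+1), Sp n v a
        = ∑ a ∈ Finset.Ico 0 (n+1), Sp n v a :=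
      Finset.sum_Ico_consecutive _ (by omega) (by omega)
    have h4 : ∑ a ∈ Finset.Ico 0 (n+1-s), Sp n v a + ∑ a ∈ Finset.Ico (n+1-s) (n+1), Sp n v a
        = ∑ a ∈ Finset.Ico 0 (n+1), Sp n v a :=
      Finset.sum_Ico_consecutive _ (by omega) (by omega)
    rw [h1, h2]
    linarith
  set B : ℕ → ℝ := fun s => ((n + 1 - s : ℕ) : ℝ) * x - (s : ℝ) * ((m : ℝ) * x) with hB
  -- exact value for vstar
  have hstar : ∀ s ∈ Finset.Icc 1 n,
      (∑ a ∈ range (n+1-s), max (x - (Sp n vstar (a+s) - Sp n vstar a)) 0)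
        = if s ≤ q then B s else 0 := by
    intro s hs
    rw [Finset.mem_Icc] at hs
    by_cases hsq : s ≤ q
    · rw [if_pos hsq]
      have hterm : ∀ a ∈ range (n+1-s), max (x - (Sp n vstar (a+s) - Sp n vstar a)) 0
          = x - (Sp n vstar (a+s) - Sp n vstar a) := by
        intro a ha
        rw [mem_range] at ha
        have hd : c (a+s) ≤ c a + 1 := hcstep a (a+s) (by omega) (by omega)
        have h1 : ((c (a+s) : ℝ)) ≤ (c a : ℝ) + 1 := by exact_mod_cast hd
        rw [hSstar, hSstar]
        refine max_eq_left ?_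
        nlinarith
      rw [Finset.sum_congr rfl hterm, Finset.sum_sub_distrib, Finset.sum_const, card_range,
          tele vstar s hs.2]
      have htop : ∑ a ∈ Finset.Ico (n+1-s) (n+1), Sp n vstar a = (s : ℝ) * (x * (m : ℝ)) := by
        have he : ∀ a ∈ Finset.Ico (n+1-s) (n+1), Sp n vstar a = x * (m : ℝ) := by
          intro a ha
          rw [Finset.mem_Ico] at ha
          rw [hSstar, hcfull a (by omega)]
        rw [Finset.sum_congr rfl he, Finset.sum_const, Nat.card_Ico]
        have hcard : n + 1 - (n + 1 - s) = s := by omega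
        rw [hcard, nsmul_eq_mul]
      have hbot : ∑ a ∈ Finset.Ico 0 s, Sp n vstar a = 0 := by
        refine Finset.sum_eq_zero fun a ha => ?_
        rw [Finset.mem_Ico] at ha
        rw [hSstar, hczero a (by omega)]
        simp
      rw [htop, hbot, hB, nsmul_eq_mul]
      ring
    · rw [if_neg hsq]
      refine Finset.sum_eq_zero fun a ha => ?_
      rw [mem_range] at ha
      have hgrow : c a + 1 ≤ c (a+s) := hcgrow a (a+s) (by omega) (by omega)
      have h1 : (c a : ℝ) + 1 ≤ (c (a+s) : ℝ) := by exact_mod_cast hgrow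
      rw [hSstar, hSstar]
      refine max_eq_right ?_
      nlinarith
  -- lower bound for u
  have hwu : ∀ i, 0 ≤ wext n u i := by
    intro i
    unfold wext
    split
    · exact hu0 _
    · exact le_rfl
  have hSu_nonneg : ∀ a, 0 ≤ Sp n u a := fun a => Finset.sum_nonneg fun i _ => hwu i
  have hSun : Sp n u n = (m : ℝ) * x := by
    rw [show Sp n u n = ∑ i ∈ range n, wext n u i from rfl,
        ← Fin.sum_univ_eq_sum_range (wext n u) n, ← husum]
    refine Finset.sum_congr rfl fun i _ => ?_
    simp [wext, i.isLt]
  have hSu_le : ∀ a, Sp n u a ≤ (m : ℝ) * x := by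
    intro a
    rcases le_or_gt a n with h | h
    · calc Sp n u a ≤ Sp n u n := Finset.sum_le_sum_of_subset_of_nonneg
            (by exact Finset.range_subset_range.mpr h) (fun i _ _ => hwu i)
        _ = (m : ℝ) * x := hSun
    · have : Sp n u a = Sp n u n + ∑ i ∈ Finset.Ico n a, wext n u i := by
        show ∑ i ∈ range a, wext n u i
          = ∑ i ∈ range n, wext n u i + ∑ i ∈ Finset.Ico n a, wext n u i
        rw [Finset.range_eq_Ico, Finset.range_eq_Ico,
            Finset.sum_Ico_consecutive (wext n u) (Nat.zero_le n) (le_of_lt h)]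
      rw [this, hSun]
      have hz : ∑ i ∈ Finset.Ico n a, wext n u i = 0 := by
        refine Finset.sum_eq_zero fun i hi => ?_
        rw [Finset.mem_Ico] at hi
        exact dif_neg (by omega)
      rw [hz, add_zero]
  have hulow : ∀ s ∈ Finset.Icc 1 n, s ≤ q →
      B s ≤ ∑ a ∈ range (n+1-s), max (x - (Sp n u (a+s) - Sp n u a)) 0 := by
    intro s hs hsq
    rw [Finset.mem_Icc] at hs
    have h1 : ∑ a ∈ range (n+1-s), (x - (Sp n u (a+s) - Sp n u a))
        ≤ ∑ a ∈ range (n+1-s), max (x - (Sp n u (a+s) - Sp n u a)) 0 :=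
      Finset.sum_le_sum fun a _ => le_max_left _ _
    refine le_trans ?_ h1
    rw [Finset.sum_sub_distrib, Finset.sum_const, card_range, tele u s hs.2]
    have htop : ∑ a ∈ Finset.Ico (n+1-s) (n+1), Sp n u a ≤ (s : ℝ) * ((m : ℝ) * x) := by
      calc ∑ a ∈ Finset.Ico (n+1-s) (n+1), Sp n u a
          ≤ (Finset.Ico (n+1-s) (n+1)).card • ((m : ℝ) * x) :=
            Finset.sum_le_card_nsmul _ _ _ (fun a _ => hSu_le a)
        _ = (s : ℝ) * ((m : ℝ) * x) := by
            rw [Nat.card_Ico]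
            have hcard : n + 1 - (n + 1 - s) = s := by omega
            rw [hcard, nsmul_eq_mul]
    have hbot : 0 ≤ ∑ a ∈ Finset.Ico 0 s, Sp n u a :=
      Finset.sum_nonneg fun a _ => hSu_nonneg a
    rw [hB, nsmul_eq_mul]
    simp only []
    linarith
  -- assemble
  rw [f_eq_pairs n x vstar, f_eq_pairs n x u]
  calc ∑ s ∈ Icc 1 n, ∑ a ∈ range (n + 1 - s), max (x - (Sp n vstar (a+s) - Sp n vstar a)) 0
      = ∑ s ∈ Icc 1 n, if s ≤ q then B s else 0 := Finset.sum_congr rfl hstar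
    _ = ∑ s ∈ (Icc 1 n).filter (fun s => s ≤ q), B s := (Finset.sum_filter _ _).symm
    _ ≤ ∑ s ∈ (Icc 1 n).filter (fun s => s ≤ q),
          ∑ a ∈ range (n + 1 - s), max (x - (Sp n u (a+s) - Sp n u a)) 0 := by
        refine Finset.sum_le_sum fun s hs => ?_
        rw [Finset.mem_filter] at hs
        exact hulow s hs.1 hs.2
    _ ≤ ∑ s ∈ Icc 1 n, ∑ a ∈ range (n + 1 - s), max (x - (Sp n u (a+s) - Sp n u a)) 0 :=
        Finset.sum_le_sum_of_subset_of_nonneg (Finset.filter_subset _ _)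
          (fun s _ _ => Finset.sum_nonneg fun a _ => le_max_right _ _)
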